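/- In a legitimate state of the delay/relay protocol, every token moves to its clockwise successor in each round: if process i has qᵢ = 1 at legitimate state σ, then after one round process i+1 has q_{i+1} = 1 and r_{i+1} = 0. -/
import Mathlib


/-- Global state of the delay/relay ring protocol. -/
structure St (n : ℕ) where
  r : ZMod n → ℕ
  q : ZMod n → ℕ
  c : ZMod n → ℕ

/-- Release condition of process `i`: a delay process (member of `D`) releases
when its counter is `0` and it has a token; a relay process releases whenever
it has a token (counting the token arriving from the predecessor). -/
def rel {n : ℕ} (D : Finset (ZMod n)) (σ : St n) (i : ZMod n) : Prop :=
  if i ∈ D then σ.c i = 0 ∧ 0 < σ.r i + σ.q (i - 1)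
  else 0 < σ.r i + σ.q (i - 1)

instance {n : ℕ} (D : Finset (ZMod n)) (σ : St n) (i : ZMod n) :
    Decidable (rel D σ i) := by unfold rel; infer_instance

/-- One synchronous global round of the delay/relay protocol: every process
absorbs the predecessor's queued token, the predecessor's queue is zeroed,
and a process enqueues (at most) one token when its release condition holds;
a delay process resets its counter to `C` upon release and otherwise
decrements it when positive. -/
def roundFn {n : ℕ} (D : Finset (ZMod n)) (C : ℕ) (σ : St n) : St n where
  r := fun i => σ.r i + σ.q (i - 1) - (if rel D σ i then 1 else 0)
  q := fun i => if rel D σ i then 1 else 0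
  c := fun i => if i ∈ D then (if rel D σ i then C else σ.c i - 1) else σ.c i

/-- Process `i` holds a token. -/
def tok {n : ℕ} (σ : St n) (i : ZMod n) : Prop := 0 < σ.r i + σ.q i

/-- Minimum clockwise distance from `i` to a process holding a token. -/
noncomputable def Rdist {n : ℕ} (σ : St n) (i : ZMod n) : ℕ :=
  sInf {d : ℕ | tok σ (i + (d : ZMod n))}

/-- Minimum counterclockwise distance from `i` to a process holding a token. -/
noncomputable def Ldist {n : ℕ} (σ : St n) (i : ZMod n) : ℕ :=
  sInf {d : ℕ | tok σ (i - (d : ZMod n))}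

/-- Minimum positive clockwise distance between token-holding processes. -/
noncomputable def tokdist {n : ℕ} (σ : St n) : ℕ :=
  sInf {d : ℕ | 0 < d ∧ ∃ i : ZMod n, tok σ i ∧ tok σ (i + (d : ZMod n))}

/-- Legitimate state: all `m` tokens are queued (none resting), queues are
`0/1`-valued, pairwise clockwise token distances exceed `C`, and the counter
of each delay process records the clockwise distance of the nearest
approaching token. -/
noncomputable def Legit {n : ℕ} [NeZero n] (D : Finset (ZMod n)) (C m : ℕ) (σ : St n) : Prop :=
  (∑ i : ZMod n, σ.q i) = m ∧ (∑ i : ZMod n, σ.r i) = 0 ∧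
  (∀ i : ZMod n, σ.q i ≤ 1) ∧
  C < tokdist σ ∧
  (∀ i ∈ D, 0 < σ.c i → σ.q i = 0 → Rdist σ i = C - σ.c i) ∧
  (∀ i ∈ D, σ.q i = 0 → σ.c i < Ldist σ i) ∧
  (∀ i ∈ D, σ.q i = 1 → σ.c i = C)

/-- In a legitimate state every token moves to its clockwise successor in one
round: if `qᵢ = 1` then after the round `q_{i+1} = 1` and `r_{i+1} = 0`. -/
theorem stmt_8 (n m C : ℕ) [NeZero n] (D : Finset (ZMod n))
    (hm : 1 ≤ m) (hsep : m * (C + 1) ≤ n) (σ : St n)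
    (hσ : Legit D C m σ) (i : ZMod n) (hi : σ.q i = 1) :
    (roundFn D C σ).q (i + 1) = 1 ∧ (roundFn D C σ).r (i + 1) = 0 := by
  obtain ⟨hq, hr, hq1, htd, hR, hL, hC⟩ := hσ
  have hr0 : ∀ j : ZMod n, σ.r j = 0 := by
    intro j
    have := (Finset.sum_eq_zero_iff.mp hr) j (Finset.mem_univ j)
    simpa using this
  have hpred : σ.q (i + 1 - 1) = 1 := by simpa using hi
  have hrel : rel D σ (i + 1) := by
    unfold rel
    have hpos : 0 < σ.r (i + 1) + σ.q (i + 1 - 1) := by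
      rw [hr0, hpred]; norm_num
    by_cases hD : i + 1 ∈ D
    · simp only [hD, if_true]
      refine ⟨?_, hpos⟩
      rcases Nat.le_one_iff_eq_zero_or_eq_one.mp (hq1 (i + 1)) with h0 | h1
      · -- q(i+1)=0 : use Ldist bound
        have hlt := hL (i + 1) hD h0
        have h1mem : (1 : ℕ) ∈ {d : ℕ | tok σ (i + 1 - (d : ZMod n))} := by
          simp only [Set.mem_setOf_eq, Nat.cast_one]
          unfold tok
          rw [hr0, hpred]
          norm_num
        have : Ldist σ (i + 1) ≤ 1 := Nat.sInf_le h1mem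
        omega
      · -- q(i+1)=1 : two adjacent tokens force C = 0
        have hcC := hC (i + 1) hD h1
        have h1mem : (1 : ℕ) ∈ {d : ℕ | 0 < d ∧ ∃ j : ZMod n, tok σ j ∧ tok σ (j + (d : ZMod n))} := by
          refine ⟨one_pos, i, ?_, ?_⟩ <;> unfold tok <;> rw [hr0] <;> simp [hi, h1]
        have : tokdist σ ≤ 1 := Nat.sInf_le h1mem
        omega
    · simpa [hD] using hpos
  constructor
  · simp [roundFn, hrel]
  · simp only [roundFn, hrel, if_true, hr0]
    simp [hi]
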